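/- arXiv:2201.08634 — 9 statements merged into one kernel-verified Lean document; each statement's English description precedes it below -/
import Mathlib

section
/- For every integer n ≥ 2, the real vector v = (5n² + 4n, 3n² + 2nα_n, 3n + 2α_n, n(2 + n − α_n)) satisfies A_n v = (2n − 1 + 2α_n) v; that is, v is an eigenvector of A_n with eigenvalue 2n − 1 + 2α_n. -/
open Matrix

/-- The matrix `A_n` with real entries. -/
noncomputable def Amat (n : ℤ) : Matrix (Fin 4) (Fin 4) ℝ :=
  !![5*(n:ℝ)+5,  -(n:ℝ),    -2*(n:ℝ), -12*(n:ℝ)-12;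
     5*(n:ℝ),    1-(n:ℝ),   -2*(n:ℝ), -12*(n:ℝ);
     5,          -1,        -1,       -12;
     2,          0,         0,        -5]

/-- For every integer `n ≥ 2`, the vector
`v = (5n² + 4n, 3n² + 2nα_n, 3n + 2α_n, n(2 + n − α_n))` (with `α_n = √(n(n−1))`)
is an eigenvector of `A_n` with eigenvalue `2n − 1 + 2α_n`. -/
theorem statement_2 (n : ℤ) (hn : 2 ≤ n) :
    (Amat n).mulVec
      ![5*(n:ℝ)^2 + 4*(n:ℝ),
        3*(n:ℝ)^2 + 2*(n:ℝ)*Real.sqrt ((n:ℝ)*((n:ℝ)-1)),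
        3*(n:ℝ) + 2*Real.sqrt ((n:ℝ)*((n:ℝ)-1)),
        (n:ℝ)*(2 + (n:ℝ) - Real.sqrt ((n:ℝ)*((n:ℝ)-1)))]
    = (2*(n:ℝ) - 1 + 2*Real.sqrt ((n:ℝ)*((n:ℝ)-1))) •
      ![5*(n:ℝ)^2 + 4*(n:ℝ),
        3*(n:ℝ)^2 + 2*(n:ℝ)*Real.sqrt ((n:ℝ)*((n:ℝ)-1)),
        3*(n:ℝ) + 2*Real.sqrt ((n:ℝ)*((n:ℝ)-1)),
        (n:ℝ)*(2 + (n:ℝ) - Real.sqrt ((n:ℝ)*((n:ℝ)-1)))] := by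
  have h1 : (0:ℝ) ≤ (n:ℝ)*((n:ℝ)-1) := by
    have : (2:ℝ) ≤ (n:ℝ) := by exact_mod_cast hn
    nlinarith
  have hs : Real.sqrt ((n:ℝ)*((n:ℝ)-1)) ^ 2 = (n:ℝ)*((n:ℝ)-1) :=
    Real.sq_sqrt h1
  set s := Real.sqrt ((n:ℝ)*((n:ℝ)-1)) with hsdef
  funext i
  fin_cases i <;>
    simp [Amat, mulVec, dotProduct, Fin.sum_univ_succ] <;>
    nlinarith [hs, sq_nonneg s]
end

section
/- For every integer n and every integer k ≥ 0, the integers d_{n,k}, a_{n,k}, b_{n,k}, c_{n,k} satisfy d_{n,k} = a_{n,k} + 2c_{n,k} and a_{n,k} = 1 + n·b_{n,k}. -/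
open Matrix

/-- The matrix `A_n` with integer entries. -/
def AmatZ (n : ℤ) : Matrix (Fin 4) (Fin 4) ℤ :=
  !![5*n+5, -n,  -2*n, -12*n-12;
     5*n,   1-n, -2*n, -12*n;
     5,     -1,  -1,   -12;
     2,     0,   0,    -5]

/-- `(d_{n,k}, a_{n,k}, b_{n,k}, c_{n,k})ᵀ = A_nᵏ (1, 1, 0, 0)ᵀ`. -/
def dabc (n : ℤ) (k : ℕ) : Fin 4 → ℤ := (AmatZ n ^ k).mulVec ![1, 1, 0, 0]

lemma dabc_succ (n : ℤ) (k : ℕ) :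
    dabc n (k+1) = (AmatZ n).mulVec (dabc n k) := by
  simp only [dabc, pow_succ', Matrix.mulVec_mulVec]

/-- For every integer `n` and every `k ≥ 0`:
`d_{n,k} = a_{n,k} + 2c_{n,k}` and `a_{n,k} = 1 + n·b_{n,k}`. -/
theorem statement_4 (n : ℤ) (k : ℕ) :
    dabc n k 0 = dabc n k 1 + 2 * dabc n k 3 ∧
    dabc n k 1 = 1 + n * dabc n k 2 := by
  induction k with
  | zero => simp [dabc]
  | succ k ih =>
    obtain ⟨h1, h2⟩ := ih
    rw [dabc_succ]
    simp only [AmatZ, Matrix.mulVec, dotProduct, Fin.sum_univ_four,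
      Matrix.cons_val_zero, Matrix.cons_val_one, Matrix.head_cons,
      Matrix.cons_val_two, Matrix.cons_val_three, Matrix.tail_cons,
      Matrix.cons_val', Matrix.cons_val_fin_one, Matrix.empty_val',
      Matrix.head_fin_const, Matrix.of_apply] at *
    constructor <;> [linear_combination h1; linear_combination h2]
end

section
/- For every integer n ≥ 2 and every integer k ≥ 1, one has b_{n,k} > c_{n,k} ≥ 0, and consequently a_{n,k} > 2. -/
open Matrix

lemma dabc_zero (n : ℤ) : dabc n 0 = ![1, 1, 0, 0] := by
  unfold dabc
  simp

lemma dabc_succ0 (n : ℤ) (k : ℕ) : dabc n (k+1) 0 =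
    (5*n+5) * dabc n k 0 + (-n) * dabc n k 1 + (-2*n) * dabc n k 2 + (-12*n-12) * dabc n k 3 := by
  rw [dabc_succ]
  simp [AmatZ, Matrix.mulVec, dotProduct, Fin.sum_univ_four]

lemma dabc_succ1 (n : ℤ) (k : ℕ) : dabc n (k+1) 1 =
    (5*n) * dabc n k 0 + (1-n) * dabc n k 1 + (-2*n) * dabc n k 2 + (-12*n) * dabc n k 3 := by
  rw [dabc_succ]
  simp [AmatZ, Matrix.mulVec, dotProduct, Fin.sum_univ_four]

lemma dabc_succ2 (n : ℤ) (k : ℕ) : dabc n (k+1) 2 =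
    5 * dabc n k 0 + (-1) * dabc n k 1 + (-1) * dabc n k 2 + (-12) * dabc n k 3 := by
  rw [dabc_succ]
  simp [AmatZ, Matrix.mulVec, dotProduct, Fin.sum_univ_four]

lemma dabc_succ3 (n : ℤ) (k : ℕ) : dabc n (k+1) 3 =
    2 * dabc n k 0 + (-5) * dabc n k 3 := by
  rw [dabc_succ]
  simp [AmatZ, Matrix.mulVec, dotProduct, Fin.sum_univ_four]

/-- Exact linear invariants: `d = n b + 2 c + 1` and `a = n b + 1`. -/
lemma dabc_inv (n : ℤ) (k : ℕ) :
    dabc n k 0 = n * dabc n k 2 + 2 * dabc n k 3 + 1 ∧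
    dabc n k 1 = n * dabc n k 2 + 1 := by
  induction k with
  | zero => rw [dabc_zero]; norm_num [show (![1, 1, 0, 0] : Fin 4 → ℤ) 2 = 0 from rfl, show (![1, 1, 0, 0] : Fin 4 → ℤ) 3 = 0 from rfl]
  | succ k ih =>
      obtain ⟨hd, ha⟩ := ih
      rw [dabc_succ0, dabc_succ1, dabc_succ2, dabc_succ3]
      constructor
      · linear_combination hd
      · linear_combination ha

/-- Inductive inequalities for `k ≥ 1`. -/
lemma dabc_ineq (n : ℤ) (hn : 2 ≤ n) (k : ℕ) :
    dabc n (k+1) 2 ≥ dabc n (k+1) 3 + 2 ∧ dabc n (k+1) 3 ≥ 2 := by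
  induction k with
  | zero =>
      rw [dabc_succ2, dabc_succ3, dabc_zero]
      norm_num [show (![1, 1, 0, 0] : Fin 4 → ℤ) 2 = 0 from rfl, show (![1, 1, 0, 0] : Fin 4 → ℤ) 3 = 0 from rfl]
  | succ k ih =>
      obtain ⟨hb, hc⟩ := ih
      obtain ⟨hd, ha⟩ := dabc_inv n (k+1)
      have hbpos : (0:ℤ) ≤ dabc n (k+1) 2 := by linarith
      have h1 : (0:ℤ) ≤ (2*n-2) * dabc n (k+1) 2 := mul_nonneg (by linarith) hbpos
      have h2 : (0:ℤ) ≤ (2*n-1) * dabc n (k+1) 2 := mul_nonneg (by linarith) hbpos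
      rw [dabc_succ2 n (k+1), dabc_succ3 n (k+1)]
      constructor
      · nlinarith [hb, hc, hd, ha, h1]
      · nlinarith [hb, hc, hd, ha, h2]

/-- For every integer `n ≥ 2` and every integer `k ≥ 1`:
`b_{n,k} > c_{n,k} ≥ 0`, and consequently `a_{n,k} > 2`. -/
theorem statement_5 (n : ℤ) (hn : 2 ≤ n) (k : ℕ) (hk : 1 ≤ k) :
    dabc n k 2 > dabc n k 3 ∧ dabc n k 3 ≥ 0 ∧ dabc n k 1 > 2 := by
  obtain ⟨j, rfl⟩ : ∃ j, k = j + 1 := ⟨k - 1, by omega⟩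
  obtain ⟨hb, hc⟩ := dabc_ineq n hn j
  obtain ⟨hd, ha⟩ := dabc_inv n (j+1)
  have h1 : (0:ℤ) ≤ (n-2) * dabc n (j+1) 2 := mul_nonneg (by linarith) (by linarith)
  refine ⟨by linarith, by linarith, ?_⟩
  nlinarith [hb, hc, ha, h1]
end

section
/- For every integer n ≥ 2, the ratios of the sequence (d_{n,k}, a_{n,k}, b_{n,k}, c_{n,k}) converge as k → ∞ to the corresponding ratios of the dominant eigenvector: lim_{k→∞} a_{n,k}/d_{n,k} = n(3n + 2α_n)/(5n² + 4n), lim_{k→∞} b_{n,k}/d_{n,k} = (3n + 2α_n)/(5n² + 4n), and lim_{k→∞} c_{n,k}/d_{n,k} = n(2 + n − α_n)/(5n² + 4n). -/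
open Matrix Filter

/-- For every integer `n ≥ 2`, with `α_n = √(n(n−1))`, the ratios
`a_{n,k}/d_{n,k}`, `b_{n,k}/d_{n,k}`, `c_{n,k}/d_{n,k}` converge as `k → ∞`
to the corresponding ratios of the dominant eigenvector. -/
theorem statement_8 (n : ℤ) (hn : 2 ≤ n) :
    Tendsto (fun k : ℕ => (dabc n k 1 : ℝ) / (dabc n k 0 : ℝ)) atTop
      (nhds ((n:ℝ) * (3*(n:ℝ) + 2*Real.sqrt ((n:ℝ)*((n:ℝ)-1))) / (5*(n:ℝ)^2 + 4*(n:ℝ)))) ∧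
    Tendsto (fun k : ℕ => (dabc n k 2 : ℝ) / (dabc n k 0 : ℝ)) atTop
      (nhds ((3*(n:ℝ) + 2*Real.sqrt ((n:ℝ)*((n:ℝ)-1))) / (5*(n:ℝ)^2 + 4*(n:ℝ)))) ∧
    Tendsto (fun k : ℕ => (dabc n k 3 : ℝ) / (dabc n k 0 : ℝ)) atTop
      (nhds ((n:ℝ) * (2 + (n:ℝ) - Real.sqrt ((n:ℝ)*((n:ℝ)-1))) / (5*(n:ℝ)^2 + 4*(n:ℝ)))) := by
  have hn2 : (2:ℝ) ≤ (n:ℝ) := by exact_mod_cast hn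
  set N : ℝ := (n:ℝ) with hN
  set α : ℝ := Real.sqrt (N*(N-1)) with hαdef
  have hα2 : α^2 = N*(N-1) := Real.sq_sqrt (by nlinarith)
  have hαnn : 0 ≤ α := Real.sqrt_nonneg _
  have hαlt : α < N := by nlinarith
  set lam : ℝ := 2*N-1+2*α with hlam
  set mu : ℝ := 2*N-1-2*α with hmu
  have hlm : lam*mu = 1 := by rw [hlam, hmu]; nlinarith
  have hαpos : 0 < α := by nlinarith
  have hlam1 : 1 < lam := by rw [hlam]; nlinarith
  have hmupos : 0 < mu := by nlinarith
  have hmu1 : mu < 1 := by nlinarith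
  -- scaled eigenvectors
  set U0 : ℝ := N^2+2*N+N*α with hU0
  set U1 : ℝ := N^2+N*α with hU1
  set U2 : ℝ := N+α with hU2
  set W0 : ℝ := N^2+2*N-N*α with hW0
  set W1 : ℝ := N^2-N*α with hW1
  set W2 : ℝ := N-α with hW2
  have hc : (2*N*(N-1) : ℝ) ≠ 0 := by nlinarith
  have dstep : ∀ k : ℕ, dabc n (k+1) = (AmatZ n).mulVec (dabc n k) := by
    intro k; unfold dabc; rw [pow_succ', mulVec_mulVec]
  have key : ∀ k : ℕ,
      2*N*(N-1)*((dabc n k 0 : ℤ) : ℝ) = U0*lam^k + W0*mu^k - 6*N ∧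
      2*N*(N-1)*((dabc n k 1 : ℤ) : ℝ) = U1*lam^k + W1*mu^k - 2*N ∧
      2*N*(N-1)*((dabc n k 2 : ℤ) : ℝ) = U2*lam^k + W2*mu^k - 2*N ∧
      2*N*(N-1)*((dabc n k 3 : ℤ) : ℝ) = N*lam^k + N*mu^k - 2*N := by
    intro k
    induction k with
    | zero =>
      have h0 : dabc n 0 = ![1,1,0,0] := by simp [dabc]
      rw [h0]
      refine ⟨?_, ?_, ?_, ?_⟩ <;> · simp [hU0, hU1, hU2, hW0, hW1, hW2]; ring
    | succ k ih =>
      obtain ⟨ih0, ih1, ih2, ih3⟩ := ih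
      rw [dstep k]
      have e0 : ((AmatZ n).mulVec (dabc n k)) 0
          = (5*n+5)*dabc n k 0 - n*dabc n k 1 - 2*n*dabc n k 2 + (-12*n-12)*dabc n k 3 := by
        simp [AmatZ, Matrix.mulVec, dotProduct, Fin.sum_univ_four]; ring
      have e1 : ((AmatZ n).mulVec (dabc n k)) 1
          = 5*n*dabc n k 0 + (1-n)*dabc n k 1 - 2*n*dabc n k 2 - 12*n*dabc n k 3 := by
        simp [AmatZ, Matrix.mulVec, dotProduct, Fin.sum_univ_four]; ring
      have e2 : ((AmatZ n).mulVec (dabc n k)) 2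
          = 5*dabc n k 0 - dabc n k 1 - dabc n k 2 - 12*dabc n k 3 := by
        simp [AmatZ, Matrix.mulVec, dotProduct, Fin.sum_univ_four]; ring
      have e3 : ((AmatZ n).mulVec (dabc n k)) 3
          = 2*dabc n k 0 - 5*dabc n k 3 := by
        simp [AmatZ, Matrix.mulVec, dotProduct, Fin.sum_univ_four]; ring
      refine ⟨?_, ?_, ?_, ?_⟩
      · rw [e0]; push_cast
        linear_combination (5*N+5)*ih0 - N*ih1 - 2*N*ih2 + (-12*N-12)*ih3
          + (-2*N*lam^k - 2*N*mu^k)*hα2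
      · rw [e1]; push_cast
        linear_combination 5*N*ih0 + (1-N)*ih1 - 2*N*ih2 - 12*N*ih3
          + (-2*N*lam^k - 2*N*mu^k)*hα2
      · rw [e2]; push_cast
        linear_combination 5*ih0 - ih1 - ih2 - 12*ih3 + (-2*lam^k - 2*mu^k)*hα2
      · rw [e3]; push_cast
        linear_combination 2*ih0 - 5*ih3
  -- limits
  have hU0pos : 0 < U0 := by rw [hU0]; nlinarith
  have hlampos : (0:ℝ) < lam := by linarith
  have hr1 : |mu/lam| < 1 := by
    rw [abs_of_nonneg (by positivity)]
    rw [div_lt_one hlampos]; linarith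
  have hr2 : |1/lam| < 1 := by
    rw [abs_of_nonneg (by positivity)]
    rw [div_lt_one hlampos]; linarith
  have t1 : Tendsto (fun k : ℕ => (mu/lam)^k) atTop (nhds 0) :=
    tendsto_pow_atTop_nhds_zero_of_abs_lt_one hr1
  have t2 : Tendsto (fun k : ℕ => (1/lam)^k) atTop (nhds 0) :=
    tendsto_pow_atTop_nhds_zero_of_abs_lt_one hr2
  have ratio : ∀ (X Y Z : ℝ),
      (∀ k : ℕ, 2*N*(N-1)*((dabc n · 0 : ℕ → ℤ) k : ℝ) = U0*lam^k + W0*mu^k - 6*N) →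
      ∀ (i : Fin 4),
      (∀ k : ℕ, 2*N*(N-1)*((dabc n k i : ℤ) : ℝ) = X*lam^k + Y*mu^k + Z) →
      Tendsto (fun k : ℕ => (dabc n k i : ℝ) / (dabc n k 0 : ℝ)) atTop (nhds (X/U0)) := by
    intro X Y Z h0 i hX
    have hfun : ∀ k : ℕ, (dabc n k i : ℝ) / (dabc n k 0 : ℝ)
        = (X + Y*(mu/lam)^k + Z*(1/lam)^k) / (U0 + W0*(mu/lam)^k + (-6*N)*(1/lam)^k) := by
      intro k
      have hlk : lam^k ≠ 0 := pow_ne_zero _ (by positivity)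
      have hmk : (mu/lam)^k = mu^k/lam^k := div_pow _ _ _
      have h1 : (dabc n k i : ℝ) / (dabc n k 0 : ℝ)
          = (2*N*(N-1)*(dabc n k i : ℝ)) / (2*N*(N-1)*(dabc n k 0 : ℝ)) :=
        (mul_div_mul_left _ _ hc).symm
      rw [h1, hX k, h0 k]
      have h2 : X*lam^k + Y*mu^k + Z = (X + Y*(mu/lam)^k + Z*(1/lam)^k) * lam^k := by
        rw [hmk, _root_.one_div_pow]; field_simp; try ring
      have h3 : U0*lam^k + W0*mu^k - 6*N
          = (U0 + W0*(mu/lam)^k + (-6*N)*(1/lam)^k) * lam^k := by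
        rw [hmk, _root_.one_div_pow]; field_simp; try ring
      rw [h2, h3, mul_div_mul_right _ _ hlk]
    simp only [hfun]
    have tnum : Tendsto (fun k : ℕ => X + Y*(mu/lam)^k + Z*(1/lam)^k) atTop
        (nhds (X + Y*0 + Z*0)) :=
      (tendsto_const_nhds.add (t1.const_mul Y)).add (t2.const_mul Z)
    have tden : Tendsto (fun k : ℕ => U0 + W0*(mu/lam)^k + (-6*N)*(1/lam)^k) atTop
        (nhds (U0 + W0*0 + (-6*N)*0)) :=
      (tendsto_const_nhds.add (t1.const_mul W0)).add (t2.const_mul (-6*N))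
    simp only [mul_zero, add_zero] at tnum tden
    exact tnum.div tden (ne_of_gt hU0pos)
  have h0 : ∀ k : ℕ, 2*N*(N-1)*((dabc n k 0 : ℤ) : ℝ) = U0*lam^k + W0*mu^k - 6*N :=
    fun k => (key k).1
  have hden : (5*N^2 + 4*N : ℝ) ≠ 0 := by nlinarith
  refine ⟨?_, ?_, ?_⟩
  · have := ratio U1 W1 (-2*N) h0 1 (fun k => by rw [(key k).2.1]; ring)
    have hval : U1/U0 = N*(3*N+2*α)/(5*N^2+4*N) := by
      rw [div_eq_div_iff (ne_of_gt hU0pos) hden, hU1, hU0]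
      linear_combination (-2*N^2)*hα2
    rwa [hval] at this
  · have := ratio U2 W2 (-2*N) h0 2 (fun k => by rw [(key k).2.2.1]; ring)
    have hval : U2/U0 = (3*N+2*α)/(5*N^2+4*N) := by
      rw [div_eq_div_iff (ne_of_gt hU0pos) hden, hU2, hU0]
      linear_combination (-2*N)*hα2
    rwa [hval] at this
  · have := ratio N N (-2*N) h0 3 (fun k => by rw [(key k).2.2.2]; ring)
    have hval : N/U0 = N*(2+N-α)/(5*N^2+4*N) := by
      rw [div_eq_div_iff (ne_of_gt hU0pos) hden, hU0]
      linear_combination (N^2)*hα2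
    rwa [hval] at this
end

section
/- For every integer n and every integer k ≥ 0, the integers d'_{n,k}, a'_{n,k}, b'_{n,k}, c'_{n,k} satisfy 3d'_{n,k} − 7b'_{n,k} − (3n+2)c'_{n,k} = 3 and a'_{n,k} = (n+2)c'_{n,k} + 1. -/
open Matrix

/-- The matrix `B_n` with integer entries. -/
def BmatZ (n : ℤ) : Matrix (Fin 4) (Fin 4) ℤ :=
  !![8*n^2+27*n+17, -n^2-5*n-6, -21*n^2-70*n-42, -2*n^2-6*n;
     8*n^2+19*n+6,  -n^2-4*n-3, -21*n^2-49*n-14, -2*n^2-4*n;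
     8*n+6,         -n-2,       -21*n-15,        -2*n;
     8*n+3,         -n-2,       -21*n-7,         -2*n+1]

/-- `(d'_{n,k}, a'_{n,k}, b'_{n,k}, c'_{n,k})ᵀ = B_nᵏ (1, 1, 0, 0)ᵀ`. -/
def dabc' (n : ℤ) (k : ℕ) : Fin 4 → ℤ := (BmatZ n ^ k).mulVec ![1, 1, 0, 0]

/-- For every integer `n` and every `k ≥ 0`:
`3d'_{n,k} − 7b'_{n,k} − (3n+2)c'_{n,k} = 3` and `a'_{n,k} = (n+2)c'_{n,k} + 1`. -/
theorem statement_11 (n : ℤ) (k : ℕ) :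
    3 * dabc' n k 0 - 7 * dabc' n k 2 - (3*n+2) * dabc' n k 3 = 3 ∧
    dabc' n k 1 = (n+2) * dabc' n k 3 + 1 := by
  induction k with
  | zero =>
    simp [dabc', pow_zero, one_mulVec]
  | succ k ih =>
    obtain ⟨h1, h2⟩ := ih
    have hstep : dabc' n (k+1) = (BmatZ n).mulVec (dabc' n k) := by
      rw [dabc', dabc', pow_succ', ← mulVec_mulVec]
    have e0 : dabc' n (k+1) 0 = (8*n^2+27*n+17) * dabc' n k 0 + (-n^2-5*n-6) * dabc' n k 1
        + (-21*n^2-70*n-42) * dabc' n k 2 + (-2*n^2-6*n) * dabc' n k 3 := by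
      rw [hstep]; simp [BmatZ, mulVec, dotProduct, Fin.sum_univ_four]; try ring
    have e1 : dabc' n (k+1) 1 = (8*n^2+19*n+6) * dabc' n k 0 + (-n^2-4*n-3) * dabc' n k 1
        + (-21*n^2-49*n-14) * dabc' n k 2 + (-2*n^2-4*n) * dabc' n k 3 := by
      rw [hstep]; simp [BmatZ, mulVec, dotProduct, Fin.sum_univ_four]; try ring
    have e2 : dabc' n (k+1) 2 = (8*n+6) * dabc' n k 0 + (-n-2) * dabc' n k 1
        + (-21*n-15) * dabc' n k 2 + (-2*n) * dabc' n k 3 := by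
      rw [hstep]; simp [BmatZ, mulVec, dotProduct, Fin.sum_univ_four]; try ring
    have e3 : dabc' n (k+1) 3 = (8*n+3) * dabc' n k 0 + (-n-2) * dabc' n k 1
        + (-21*n-7) * dabc' n k 2 + (-2*n+1) * dabc' n k 3 := by
      rw [hstep]; simp [BmatZ, mulVec, dotProduct, Fin.sum_univ_four]; try ring
    constructor
    · rw [e0, e2, e3]; linear_combination h1
    · rw [e1, e3]; linear_combination h2
end

section
/- For every integer n ≥ 1 and every integer k ≥ 1, one has 3c'_{n,k} > b'_{n,k} ≥ 0, and consequently c'_{n,k} > 0 and a'_{n,k} > 2. -/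
open Matrix

/-- Inductive invariant. -/
def DabcInv (n : ℤ) (w : Fin 4 → ℤ) : Prop :=
  w 1 = (n+2) * w 3 + 1 ∧
  3*(n+2) * w 0 = (3*n+2) * w 1 + 7*(n+2) * w 2 + 4 ∧
  0 ≤ w 2 ∧ 1 ≤ w 3 ∧ w 2 < 3 * w 3

lemma dabc'_succ (n : ℤ) (k : ℕ) :
    dabc' n (k+1) = (BmatZ n).mulVec (dabc' n k) := by
  simp [dabc', pow_succ', Matrix.mulVec_mulVec]

lemma mulVec_comp (n : ℤ) (w : Fin 4 → ℤ) :
    (BmatZ n).mulVec w 0 =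
      (8*n^2+27*n+17)*w 0 + (-n^2-5*n-6)*w 1 + (-21*n^2-70*n-42)*w 2 + (-2*n^2-6*n)*w 3 ∧
    (BmatZ n).mulVec w 1 =
      (8*n^2+19*n+6)*w 0 + (-n^2-4*n-3)*w 1 + (-21*n^2-49*n-14)*w 2 + (-2*n^2-4*n)*w 3 ∧
    (BmatZ n).mulVec w 2 =
      (8*n+6)*w 0 + (-n-2)*w 1 + (-21*n-15)*w 2 + (-2*n)*w 3 ∧
    (BmatZ n).mulVec w 3 =
      (8*n+3)*w 0 + (-n-2)*w 1 + (-21*n-7)*w 2 + (-2*n+1)*w 3 := by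
  refine ⟨?_, ?_, ?_, ?_⟩ <;>
    simp [BmatZ, Matrix.mulVec, dotProduct, Fin.sum_univ_four]

lemma inv_base (n : ℤ) (hn : 1 ≤ n) : DabcInv n (dabc' n 1) := by
  have h : ∀ i, dabc' n 1 i = ![7*n^2+22*n+11, 7*n^2+15*n+3, 7*n+4, 7*n+1] i := by
    intro i
    fin_cases i <;>
      simp [dabc', BmatZ, Matrix.mulVec, dotProduct, Fin.sum_univ_four] <;> ring
  have h0 := h 0; have h1 := h 1; have h2 := h 2; have h3 := h 3
  simp only [Matrix.cons_val_zero, Matrix.cons_val_one, Matrix.head_cons,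
    Matrix.cons_val_two, Matrix.tail_cons, Matrix.cons_val_three] at h0 h1 h2 h3
  unfold DabcInv
  rw [h0, h1, h2, h3]
  refine ⟨by ring, by ring, by nlinarith, by nlinarith, by nlinarith⟩

set_option maxHeartbeats 1000000 in
lemma inv_step (n : ℤ) (hn : 1 ≤ n) (w : Fin 4 → ℤ) (hw : DabcInv n w) :
    DabcInv n ((BmatZ n).mulVec w) := by
  obtain ⟨hI1, hI2, hb, hc, hlt⟩ := hw
  obtain ⟨hv0, hv1, hv2, hv3⟩ := mulVec_comp n w
  set v := (BmatZ n).mulVec w with hv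
  have ht : 0 ≤ 3 * w 3 - w 2 - 1 := by omega
  have hn2 : (0:ℤ) < n + 2 := by linarith
  have hEb : 3*(n+2) * v 2 =
      (n+2) * ((7*n+3)*(3*w 3 - w 2 - 1) + (21*n^2-5*n-9)*w 3 + 28*n+15) := by
    linear_combination 3*(n+2)*hv2 + (8*n+6)*hI2 + (21*n^2+22*n)*hI1
  have hEc : 3*(n+2) * v 3 =
      (n+2) * (7*n*(3*w 3 - w 2 - 1) + (21*n^2-14*n-3)*w 3 + 28*n+3) := by
    linear_combination 3*(n+2)*hv3 + (8*n+3)*hI2 + (21*n^2+13*n-6)*hI1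
  have hA : n ≤ n*n := le_mul_of_one_le_left (by linarith) hn
  have hB : n*n ≤ n*(n*n) := le_mul_of_one_le_left (mul_nonneg (by linarith) (by linarith)) hn
  have h1 : 0 ≤ ((n+2)*(7*n+3)) * (3*w 3 - w 2 - 1) :=
    mul_nonneg (by linarith [hA, hB]) ht
  have h2 : 0 ≤ ((n+2)*(21*n^2-5*n-9)) * w 3 :=
    mul_nonneg (by linarith [hA, hB]) (by linarith)
  have h3 : 0 ≤ ((n+2)*(7*n)) * (3*w 3 - w 2 - 1) :=
    mul_nonneg (by linarith [hA, hB]) ht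
  have h4 : 0 ≤ ((n+2)*(21*n^2-14*n-3)) * (w 3 - 1) :=
    mul_nonneg (by linarith [hA, hB]) (by linarith)
  have h5 : 0 ≤ ((n+2)*(14*n-3)) * (3*w 3 - w 2 - 1) :=
    mul_nonneg (by linarith [hA, hB]) ht
  have h6 : 0 ≤ ((n+2)*(42*n^2-37*n)) * (w 3 - 1) :=
    mul_nonneg (by linarith [hA, hB]) (by linarith)
  have hnn : (0:ℤ) ≤ n*n := mul_nonneg (by linarith) (by linarith)
  have hn3 : (0:ℤ) ≤ n*n*n := mul_nonneg hnn (by linarith)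
  have hpos : (0:ℤ) < 3*(n+2) := by linarith
  refine ⟨?_, ?_, ?_, ?_, ?_⟩
  · linear_combination hv1 - (n+2)*hv3 + hI1
  · linear_combination 3*(n+2)*hv0 - (3*n+2)*hv1 - 7*(n+2)*hv2 + hI2
  · refine le_of_mul_le_mul_left ?_ hpos
    linarith [hEb, h1, h2, hn, hnn]
  · have h0 : 0 < v 3 := by
      refine lt_of_mul_lt_mul_left ?_ hpos.le
      linarith [hEc, h3, h4, hn, hnn, hn3]
    linarith
  · refine lt_of_mul_lt_mul_left ?_ hpos.le
    linarith [hEb, hEc, h5, h6, hn, hnn, hn3]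

lemma inv_all (n : ℤ) (hn : 1 ≤ n) (k : ℕ) (hk : 1 ≤ k) : DabcInv n (dabc' n k) := by
  induction k with
  | zero => omega
  | succ m ih =>
    rcases Nat.eq_or_lt_of_le hk with h | h
    · exact h ▸ inv_base n hn
    · have hm : 1 ≤ m := by omega
      rw [dabc'_succ]
      exact inv_step n hn _ (ih hm)

/-- For every integer `n ≥ 1` and every integer `k ≥ 1`:
`3c'_{n,k} > b'_{n,k} ≥ 0`, and consequently `c'_{n,k} > 0` and `a'_{n,k} > 2`. -/
theorem statement_12 (n : ℤ) (hn : 1 ≤ n) (k : ℕ) (hk : 1 ≤ k) :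
    3 * dabc' n k 3 > dabc' n k 2 ∧ dabc' n k 2 ≥ 0 ∧
    dabc' n k 3 > 0 ∧ dabc' n k 1 > 2 := by
  obtain ⟨hI1, hI2, hb, hc, hlt⟩ := inv_all n hn k hk
  refine ⟨hlt, hb, by linarith, ?_⟩
  rw [hI1]
  nlinarith
end

section
/- For every integer n ≥ 1, the ratios of the sequence (d'_{n,k}, a'_{n,k}, b'_{n,k}, c'_{n,k}) converge as k → ∞ to the corresponding ratios of the dominant eigenvector: lim_{k→∞} a'_{n,k}/d'_{n,k} = (7n(n+2)(9n + β_n + 6))/(14n(8n² + 27n + 16)), lim_{k→∞} b'_{n,k}/d'_{n,k} = (n(21n² − 3nβ_n + 126n − 2β_n + 84))/(14n(8n² + 27n + 16)), and lim_{k→∞} c'_{n,k}/d'_{n,k} = (7n(9n + β_n + 6))/(14n(8n² + 27n + 16)). -/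
open Matrix Filter

set_option maxHeartbeats 2000000 in
/-- For every integer `n ≥ 1`, with `β_n = √(49n² − 28)`, the ratios
`a'_{n,k}/d'_{n,k}`, `b'_{n,k}/d'_{n,k}`, `c'_{n,k}/d'_{n,k}` converge as `k → ∞`
to the corresponding ratios of the dominant eigenvector. -/
theorem statement_15 (n : ℤ) (hn : 1 ≤ n) :
    Tendsto (fun k : ℕ => (dabc' n k 1 : ℝ) / (dabc' n k 0 : ℝ)) atTop
      (nhds ((7*(n:ℝ)*((n:ℝ)+2)*(9*(n:ℝ) + Real.sqrt (49*(n:ℝ)^2 - 28) + 6))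
        / (14*(n:ℝ)*(8*(n:ℝ)^2 + 27*(n:ℝ) + 16)))) ∧
    Tendsto (fun k : ℕ => (dabc' n k 2 : ℝ) / (dabc' n k 0 : ℝ)) atTop
      (nhds (((n:ℝ)*(21*(n:ℝ)^2 - 3*(n:ℝ)*Real.sqrt (49*(n:ℝ)^2 - 28) + 126*(n:ℝ)
            - 2*Real.sqrt (49*(n:ℝ)^2 - 28) + 84))
        / (14*(n:ℝ)*(8*(n:ℝ)^2 + 27*(n:ℝ) + 16)))) ∧
    Tendsto (fun k : ℕ => (dabc' n k 3 : ℝ) / (dabc' n k 0 : ℝ)) atTop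
      (nhds ((7*(n:ℝ)*(9*(n:ℝ) + Real.sqrt (49*(n:ℝ)^2 - 28) + 6))
        / (14*(n:ℝ)*(8*(n:ℝ)^2 + 27*(n:ℝ) + 16)))) := by
  -- integer-side facts
  have hstep : ∀ k, dabc' n (k+1) = (BmatZ n).mulVec (dabc' n k) := by
    intro k; simp only [dabc', pow_succ']; rw [← Matrix.mulVec_mulVec]
  have h0 : dabc' n 0 = ![1,1,0,0] := by
    simp only [dabc', pow_zero, Matrix.one_mulVec]
  have h1 : dabc' n 1 = ![7*n^2+22*n+11, 7*n^2+15*n+3, 7*n+4, 7*n+1] := by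
    rw [hstep 0, h0]; funext i; fin_cases i <;>
      simp [BmatZ, Matrix.mulVec, dotProduct, Fin.sum_univ_four] <;> ring
  have h2 : dabc' n 2 = ![49*n^4+154*n^3+63*n^2-14*n+1, 49*n^4+105*n^3+7*n^2-14*n+1,
      49*n^3+28*n^2-4*n, 49*n^3+7*n^2-7*n] := by
    rw [hstep 1, h1]; funext i; fin_cases i <;>
      simp [BmatZ, Matrix.mulVec, dotProduct, Fin.sum_univ_four] <;> ring
  set cv : Fin 4 → ℤ := ![30*n+24,16*n+8,10*n+8,7*n+2] with hcv
  have hBc : (BmatZ n).mulVec cv = cv := by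
    rw [hcv]; funext i; fin_cases i <;>
      simp [BmatZ, Matrix.mulVec, dotProduct, Fin.sum_univ_four] <;> ring
  have hrecZ : ∀ k, dabc' n (k+2) = (7*n^2-2) • dabc' n (k+1) - dabc' n k + cv := by
    intro k; induction k with
    | zero =>
      rw [h2, h1, h0, hcv]; funext i; fin_cases i <;>
        simp [Pi.smul_apply, Pi.sub_apply, Pi.add_apply, smul_eq_mul] <;> ring
    | succ k ih =>
      calc dabc' n (k+1+2) = (BmatZ n).mulVec (dabc' n (k+1+1)) := hstep (k+1+1)
        _ = (BmatZ n).mulVec ((7*n^2-2) • dabc' n (k+1) - dabc' n k + cv) := by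
            rw [show (k+1+1 : ℕ) = k+2 from rfl, ih]
        _ = (7*n^2-2) • ((BmatZ n).mulVec (dabc' n (k+1))) - (BmatZ n).mulVec (dabc' n k) + cv := by
            rw [Matrix.mulVec_add, Matrix.mulVec_sub, Matrix.mulVec_smul, hBc]
        _ = (7*n^2-2) • dabc' n (k+1+1) - dabc' n (k+1) + cv := by
            rw [← hstep k, ← hstep (k+1)]
  -- real-side setup
  have hn1 : (1:ℝ) ≤ (n:ℝ) := by exact_mod_cast hn
  set b : ℝ := Real.sqrt (49*(n:ℝ)^2 - 28) with hbdef
  have hb2 : b^2 = 49*(n:ℝ)^2 - 28 := Real.sq_sqrt (by nlinarith)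
  have hbpos : (0:ℝ) < b := Real.sqrt_pos.mpr (by nlinarith)
  set L : ℝ := ((7*(n:ℝ)^2-2) + (n:ℝ)*b)/2 with hLdef
  set M : ℝ := ((7*(n:ℝ)^2-2) - (n:ℝ)*b)/2 with hMdef
  have hL2 : L^2 = (7*(n:ℝ)^2-2)*L - 1 := by
    rw [hLdef]; linear_combination ((n:ℝ)^2/4) * hb2
  have hM2 : M^2 = (7*(n:ℝ)^2-2)*M - 1 := by
    rw [hMdef]; linear_combination ((n:ℝ)^2/4) * hb2
  have hnb : (0:ℝ) < (n:ℝ)*b := mul_pos (by linarith) hbpos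
  have hLpos : (0:ℝ) < L := by rw [hLdef]; nlinarith
  have hL1 : (1:ℝ) < L := by rw [hLdef]; nlinarith
  have hnbS : (n:ℝ)*b < 7*(n:ℝ)^2-2 := by
    have hsq : ((n:ℝ)*b)^2 < (7*(n:ℝ)^2-2)^2 := by nlinarith [hb2, sq_nonneg ((n:ℝ))]
    exact lt_of_pow_lt_pow_left₀ 2 (by nlinarith) hsq
  have hMpos : (0:ℝ) < M := by rw [hMdef]; linarith
  have hML : M < L := by rw [hMdef, hLdef]; linarith
  have hq0 : (0:ℝ) ≤ M/L := le_of_lt (div_pos hMpos hLpos)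
  have hq1 : M/L < 1 := (div_lt_one hLpos).mpr hML
  have hp0 : (0:ℝ) ≤ 1/L := le_of_lt (div_pos one_pos hLpos)
  have hp1 : 1/L < 1 := (div_lt_one hLpos).mpr hL1
  have hLne : L ≠ 0 := ne_of_gt hLpos
  have hd : (0:ℝ) < 7*(n:ℝ)^2-4 := by nlinarith
  have h4d : (4*(7*(n:ℝ)^2-4)) ≠ 0 := by positivity
  set Pa : Fin 4 → ℝ := ![2*(7*(n:ℝ)^2+30*(n:ℝ)+20) + 2*((n:ℝ)+2)*b,
                          2*(7*(n:ℝ)^2+16*(n:ℝ)+4) + 2*((n:ℝ)+2)*b,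
                          20*(n:ℝ)+16 + (8/7)*b,
                          2*(7*(n:ℝ)+2) + 2*b] with hPa
  set Pb : Fin 4 → ℝ := ![2*(7*(n:ℝ)^2+30*(n:ℝ)+20) - 2*((n:ℝ)+2)*b,
                          2*(7*(n:ℝ)^2+16*(n:ℝ)+4) - 2*((n:ℝ)+2)*b,
                          20*(n:ℝ)+16 - (8/7)*b,
                          2*(7*(n:ℝ)+2) - 2*b] with hPb
  have hrecR : ∀ k (i : Fin 4), ((dabc' n (k+2) i : ℤ):ℝ)
      = (7*(n:ℝ)^2-2) * ((dabc' n (k+1) i : ℤ):ℝ) - ((dabc' n k i : ℤ):ℝ) + ((cv i : ℤ):ℝ) := by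
    intro k i
    have h := congrFun (hrecZ k) i
    simp only [Pi.add_apply, Pi.sub_apply, Pi.smul_apply, smul_eq_mul] at h
    have h' : ((dabc' n (k+2) i : ℤ):ℝ)
        = (((7*n^2-2) * dabc' n (k+1) i - dabc' n k i + cv i : ℤ) : ℝ) := by
      exact_mod_cast congrArg (fun z : ℤ => (z:ℝ)) h
    push_cast at h'
    linarith [h']
  -- main closed-form
  have main : ∀ k : ℕ,
      (∀ i, 4*(7*(n:ℝ)^2-4) * ((dabc' n k i : ℤ):ℝ)
          = Pa i * L^k + Pb i * M^k - 4*((cv i : ℤ):ℝ)) ∧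
      (∀ i, 4*(7*(n:ℝ)^2-4) * ((dabc' n (k+1) i : ℤ):ℝ)
          = Pa i * L^(k+1) + Pb i * M^(k+1) - 4*((cv i : ℤ):ℝ)) := by
    intro k; induction k with
    | zero =>
      constructor
      · intro i; fin_cases i <;>
          simp [h0, hPa, hPb, hcv] <;> push_cast <;> ring
      · intro i; fin_cases i
        · simp [h1, hPa, hPb, hcv, hLdef, hMdef]; push_cast
          linear_combination (-(n:ℝ)*(2*(n:ℝ)+4)) * hb2
        · simp [h1, hPa, hPb, hcv, hLdef, hMdef]; push_cast
          linear_combination (-(n:ℝ)*(2*(n:ℝ)+4)) * hb2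
        · simp [h1, hPa, hPb, hcv, hLdef, hMdef]; push_cast
          linear_combination (-(8*(n:ℝ)/7)) * hb2
        · simp [h1, hPa, hPb, hcv, hLdef, hMdef]; push_cast
          linear_combination (-(2*(n:ℝ))) * hb2
    | succ k ih =>
      obtain ⟨ih1, ih2⟩ := ih
      refine ⟨ih2, ?_⟩
      intro i
      have hr := hrecR k i
      have e1 := ih1 i
      have e2 := ih2 i
      linear_combination (4*(7*(n:ℝ)^2-4)) * hr + (7*(n:ℝ)^2-2) * e2 - e1
        - (Pa i * L^k) * hL2 - (Pb i * M^k) * hM2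
  -- limit of the ratios
  have key : ∀ i : Fin 4, Tendsto (fun k : ℕ => ((dabc' n k i : ℤ):ℝ)/((dabc' n k 0 : ℤ):ℝ))
      atTop (nhds (Pa i / Pa 0)) := by
    intro i
    have heq : ∀ k : ℕ, ((dabc' n k i : ℤ):ℝ)/((dabc' n k 0 : ℤ):ℝ)
        = (Pa i + Pb i*(M/L)^k - 4*((cv i : ℤ):ℝ)*(1/L)^k)
          / (Pa 0 + Pb 0*(M/L)^k - 4*((cv 0 : ℤ):ℝ)*(1/L)^k) := by
      intro k
      have hLk : L^k ≠ 0 := pow_ne_zero _ hLne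
      have hqk : (M/L)^k * L^k = M^k := by
        rw [← mul_pow, div_mul_cancel₀ _ hLne]
      have hpk : (1/L)^k * L^k = 1 := by
        rw [← mul_pow, one_div_mul_cancel hLne, one_pow]
      have hnum : ∀ j : Fin 4, (Pa j + Pb j*(M/L)^k - 4*((cv j : ℤ):ℝ)*(1/L)^k) * L^k
          = Pa j * L^k + Pb j * M^k - 4*((cv j : ℤ):ℝ) := by
        intro j
        linear_combination (Pb j) * hqk - (4*((cv j : ℤ):ℝ)) * hpk
      calc ((dabc' n k i : ℤ):ℝ)/((dabc' n k 0 : ℤ):ℝ)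
          = (4*(7*(n:ℝ)^2-4) * ((dabc' n k i : ℤ):ℝ))
            / (4*(7*(n:ℝ)^2-4) * ((dabc' n k 0 : ℤ):ℝ)) := (mul_div_mul_left _ _ h4d).symm
        _ = (Pa i * L^k + Pb i * M^k - 4*((cv i : ℤ):ℝ))
            / (Pa 0 * L^k + Pb 0 * M^k - 4*((cv 0 : ℤ):ℝ)) := by
            rw [(main k).1 i, (main k).1 0]
        _ = ((Pa i + Pb i*(M/L)^k - 4*((cv i : ℤ):ℝ)*(1/L)^k) * L^k)
            / ((Pa 0 + Pb 0*(M/L)^k - 4*((cv 0 : ℤ):ℝ)*(1/L)^k) * L^k) := by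
            rw [hnum i, hnum 0]
        _ = _ := mul_div_mul_right _ _ hLk
    have t1 : Tendsto (fun k : ℕ => (M/L)^k) atTop (nhds 0) :=
      tendsto_pow_atTop_nhds_zero_of_lt_one hq0 hq1
    have t2 : Tendsto (fun k : ℕ => (1/L)^k) atTop (nhds 0) :=
      tendsto_pow_atTop_nhds_zero_of_lt_one hp0 hp1
    have hPa0pos : (0:ℝ) < Pa 0 := by
      simp only [hPa]
      simp
      nlinarith
    have tnum : Tendsto (fun k : ℕ => Pa i + Pb i*(M/L)^k - 4*((cv i : ℤ):ℝ)*(1/L)^k)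
        atTop (nhds (Pa i)) := by
      have := ((tendsto_const_nhds : Tendsto (fun _ : ℕ => Pa i) atTop (nhds (Pa i))).add
        (t1.const_mul (Pb i))).sub (t2.const_mul (4*((cv i : ℤ):ℝ)))
      simpa using this
    have tden : Tendsto (fun k : ℕ => Pa 0 + Pb 0*(M/L)^k - 4*((cv 0 : ℤ):ℝ)*(1/L)^k)
        atTop (nhds (Pa 0)) := by
      have := ((tendsto_const_nhds : Tendsto (fun _ : ℕ => Pa 0) atTop (nhds (Pa 0))).add
        (t1.const_mul (Pb 0))).sub (t2.const_mul (4*((cv 0 : ℤ):ℝ)))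
      simpa using this
    simp only [heq]
    exact tnum.div tden (ne_of_gt hPa0pos)
  have hPa0pos : (0:ℝ) < Pa 0 := by
    simp only [hPa]; simp; nlinarith
  have hdenpos : (0:ℝ) < 14*(n:ℝ)*(8*(n:ℝ)^2 + 27*(n:ℝ) + 16) := by nlinarith
  refine ⟨?_, ?_, ?_⟩
  · have heq1 : (7*(n:ℝ)*((n:ℝ)+2)*(9*(n:ℝ) + b + 6))
        / (14*(n:ℝ)*(8*(n:ℝ)^2 + 27*(n:ℝ) + 16)) = Pa 1 / Pa 0 := by
      have e1 : Pa 1 = 2*(7*(n:ℝ)^2+16*(n:ℝ)+4) + 2*((n:ℝ)+2)*b := by simp [hPa]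
      have e0 : Pa 0 = 2*(7*(n:ℝ)^2+30*(n:ℝ)+20) + 2*((n:ℝ)+2)*b := by simp [hPa]
      rw [e1, e0, div_eq_div_iff (ne_of_gt hdenpos) (by rw [← e0]; exact ne_of_gt hPa0pos)]
      linear_combination (14*(n:ℝ)*((n:ℝ)+2)^2) * hb2
    rw [heq1]; exact key 1
  · have heq2 : ((n:ℝ)*(21*(n:ℝ)^2 - 3*(n:ℝ)*b + 126*(n:ℝ) - 2*b + 84))
        / (14*(n:ℝ)*(8*(n:ℝ)^2 + 27*(n:ℝ) + 16)) = Pa 2 / Pa 0 := by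
      have e2 : Pa 2 = 20*(n:ℝ)+16 + (8/7)*b := by simp [hPa]
      have e0 : Pa 0 = 2*(7*(n:ℝ)^2+30*(n:ℝ)+20) + 2*((n:ℝ)+2)*b := by simp [hPa]
      rw [e2, e0, div_eq_div_iff (ne_of_gt hdenpos) (by rw [← e0]; exact ne_of_gt hPa0pos)]
      linear_combination (-(2*(n:ℝ)*(3*(n:ℝ)+2)*((n:ℝ)+2))) * hb2
    rw [heq2]; exact key 2
  · have heq3 : (7*(n:ℝ)*(9*(n:ℝ) + b + 6))
        / (14*(n:ℝ)*(8*(n:ℝ)^2 + 27*(n:ℝ) + 16)) = Pa 3 / Pa 0 := by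
      have e3 : Pa 3 = 2*(7*(n:ℝ)+2) + 2*b := by simp [hPa]
      have e0 : Pa 0 = 2*(7*(n:ℝ)^2+30*(n:ℝ)+20) + 2*((n:ℝ)+2)*b := by simp [hPa]
      rw [e3, e0, div_eq_div_iff (ne_of_gt hdenpos) (by rw [← e0]; exact ne_of_gt hPa0pos)]
      linear_combination (14*(n:ℝ)*((n:ℝ)+2)) * hb2
    rw [heq3]; exact key 3
end

section
/- For every integer n ≥ 1, the inequality 14n(8n² + 27n + 16)·√(n² + 6n + 10) < (n+2)²·7n(9n + β_n + 6) + 7·n(21n² − 3nβ_n + 126n − 2β_n + 84) + 2n·7n(9n + β_n + 6) holds; equivalently, the class W⁺_sq2 of degree 14n(8n²+27n+16) on the blow-up at s = (n+3)² + 2 points, with (n+2)² points of multiplicity 7n(9n+β_n+6), seven points of multiplicity n(21n²−3nβ_n+126n−2β_n+84), and 2n points of multiplicity 7n(9n+β_n+6), is De Fernex negative. -/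
/-- For every integer `n ≥ 1`, with `β_n = √(49n² − 28)`, the inequality
`14n(8n² + 27n + 16)·√(n² + 6n + 10)
  < (n+2)²·7n(9n + β_n + 6) + 7·n(21n² − 3nβ_n + 126n − 2β_n + 84) + 2n·7n(9n + β_n + 6)`
holds; i.e. the class `W⁺_sq2` on the blow-up at `s = (n+3)² + 2` points is
De Fernex negative. -/
theorem statement_18 (n : ℤ) (hn : 1 ≤ n) :
    14*(n:ℝ)*(8*(n:ℝ)^2 + 27*(n:ℝ) + 16) * Real.sqrt ((n:ℝ)^2 + 6*(n:ℝ) + 10)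
      < ((n:ℝ)+2)^2 * (7*(n:ℝ)*(9*(n:ℝ) + Real.sqrt (49*(n:ℝ)^2 - 28) + 6))
        + 7 * ((n:ℝ)*(21*(n:ℝ)^2 - 3*(n:ℝ)*Real.sqrt (49*(n:ℝ)^2 - 28) + 126*(n:ℝ)
            - 2*Real.sqrt (49*(n:ℝ)^2 - 28) + 84))
        + 2*(n:ℝ) * (7*(n:ℝ)*(9*(n:ℝ) + Real.sqrt (49*(n:ℝ)^2 - 28) + 6)) := by
  set x : ℝ := (n:ℝ) with hxdef
  have hx : (1:ℝ) ≤ x := by rw [hxdef]; exact_mod_cast hn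
  set t : ℝ := Real.sqrt (x^2 + 6*x + 10) with htdef
  set b : ℝ := Real.sqrt (49*x^2 - 28) with hbdef
  have ht0 : 0 ≤ t := Real.sqrt_nonneg _
  have hb0 : 0 ≤ b := Real.sqrt_nonneg _
  have ht2 : t^2 = x^2 + 6*x + 10 := Real.sq_sqrt (by nlinarith)
  have hb2 : b^2 = 49*x^2 - 28 := Real.sq_sqrt (by nlinarith)
  -- abbreviations
  have hu : (0:ℝ) < 2*(x+3) := by linarith
  -- Step 1 : (2*(x+3))*t ≤ 2*(x+3)^2 + 1
  have h1 : (2*(x+3))*t ≤ 2*(x+3)^2 + 1 := by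
    nlinarith [sq_nonneg ((2*(x+3))*t - (2*(x+3)^2 + 1)), sq_nonneg ((2*(x+3))*t), ht2,
      mul_nonneg (le_of_lt hu) ht0]
  -- D2 = A*(2*(x+3)^2+1) - B*(2*(x+3)) where A = 2*(8x^2+27x+16), B = (9x+27)(x^2+6x+4)
  -- Step 2 : D2 < (2*(x+3)) * (x^2+3x+2) * b
  have hD2pos : (0:ℝ) < (2*(8*x^2+27*x+16))*(2*(x+3)^2+1) - ((9*x+27)*(x^2+6*x+4))*(2*(x+3)) := by
    nlinarith [sq_nonneg (x-1), sq_nonneg ((x-1)^2), mul_nonneg (sub_nonneg.2 hx) (sq_nonneg (x-1))]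
  have hCb0 : (0:ℝ) < (2*(x+3)) * ((x^2+3*x+2) * b) := by
    have hb1 : (0:ℝ) < b := Real.sqrt_pos.2 (by nlinarith)
    have : (0:ℝ) < x^2+3*x+2 := by nlinarith
    positivity
  have hsq : ((2*(8*x^2+27*x+16))*(2*(x+3)^2+1) - ((9*x+27)*(x^2+6*x+4))*(2*(x+3)))^2
      < ((2*(x+3)) * ((x^2+3*x+2) * b))^2 := by
    nlinarith [hb2, sq_nonneg (x-1), mul_nonneg (sub_nonneg.2 hx) (sq_nonneg (x-1)),
      mul_nonneg (mul_nonneg (sub_nonneg.2 hx) (sub_nonneg.2 hx)) (sq_nonneg (x-1)),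
      mul_nonneg (sq_nonneg (x-1)) (sq_nonneg (x-1)),
      mul_nonneg (mul_nonneg (sub_nonneg.2 hx) (sq_nonneg (x-1))) (sq_nonneg (x-1)),
      mul_nonneg (mul_nonneg (mul_nonneg (sub_nonneg.2 hx) (sub_nonneg.2 hx)) (sq_nonneg (x-1))) (sq_nonneg (x-1))]
  have h2 : (2*(8*x^2+27*x+16))*(2*(x+3)^2+1) - ((9*x+27)*(x^2+6*x+4))*(2*(x+3))
      < (2*(x+3)) * ((x^2+3*x+2) * b) := by
    nlinarith [hsq, hD2pos, hCb0]
  -- combine: A*t < B + C*b, after multiplying by 2*(x+3)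
  have key : (2*(8*x^2+27*x+16))*t < (9*x+27)*(x^2+6*x+4) + (x^2+3*x+2)*b := by
    have h3 : (2*(x+3)) * ((2*(8*x^2+27*x+16))*t)
        < (2*(x+3)) * ((9*x+27)*(x^2+6*x+4) + (x^2+3*x+2)*b) := by
      nlinarith [h1, h2, sq_nonneg x]
    exact lt_of_mul_lt_mul_left h3 (le_of_lt hu)
  have h7x : (0:ℝ) < 7*x := by linarith
  have hfin := mul_lt_mul_of_pos_left key h7x
  nlinarith [hfin]
end

section
/- For every integer n ≥ 1, the inequality 14n(8n² + 27n + 16)·√(n² + 4n + 7) < (n+1)²·(7n(n+2)/(n+1))(9n + β_n + 6) + 7·n(21n² − 3nβ_n + 126n − 2β_n + 84) + 2n·7n(9n + β_n + 6) holds; equivalently, the class W⁺_sq4 of degree 14n(8n²+27n+16) on the blow-up at s = (n+2)² + 4 points, with (n+1)² points of multiplicity 7n((n+2)/(n+1))(9n+β_n+6), seven points of multiplicity n(21n²−3nβ_n+126n−2β_n+84), and 2n points of multiplicity 7n(9n+β_n+6), is De Fernex negative. -/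
/-- For every integer `n ≥ 1`, with `β_n = √(49n² − 28)`, the inequality
`14n(8n² + 27n + 16)·√(n² + 4n + 7)
  < (n+1)²·(7n(n+2)/(n+1))(9n + β_n + 6) + 7·n(21n² − 3nβ_n + 126n − 2β_n + 84)
    + 2n·7n(9n + β_n + 6)`
holds; i.e. the class `W⁺_sq4` on the blow-up at `s = (n+2)² + 4` points is
De Fernex negative. -/
theorem statement_19 (n : ℤ) (hn : 1 ≤ n) :
    14*(n:ℝ)*(8*(n:ℝ)^2 + 27*(n:ℝ) + 16) * Real.sqrt ((n:ℝ)^2 + 4*(n:ℝ) + 7)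
      < ((n:ℝ)+1)^2 * ((7*(n:ℝ)*((n:ℝ)+2)/((n:ℝ)+1)) * (9*(n:ℝ) + Real.sqrt (49*(n:ℝ)^2 - 28) + 6))
        + 7 * ((n:ℝ)*(21*(n:ℝ)^2 - 3*(n:ℝ)*Real.sqrt (49*(n:ℝ)^2 - 28) + 126*(n:ℝ)
            - 2*Real.sqrt (49*(n:ℝ)^2 - 28) + 84))
        + 2*(n:ℝ) * (7*(n:ℝ)*(9*(n:ℝ) + Real.sqrt (49*(n:ℝ)^2 - 28) + 6)) := by
  have hx : (1:ℝ) ≤ (n:ℝ) := by exact_mod_cast hn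
  set x : ℝ := (n:ℝ) with hxdef
  set a : ℝ := Real.sqrt (x^2 + 4*x + 7) with hadef
  set b : ℝ := Real.sqrt (49*x^2 - 28) with hbdef
  have ha0 : 0 ≤ a := Real.sqrt_nonneg _
  have hb0 : 0 ≤ b := Real.sqrt_nonneg _
  have ha2 : a^2 = x^2 + 4*x + 7 := Real.sq_sqrt (by nlinarith)
  have hb2 : b^2 = 49*x^2 - 28 := Real.sq_sqrt (by nlinarith)
  -- upper bound for a : 2*(x+2)*a ≤ 2x²+8x+11
  have hA : 2*(x+2)*a ≤ 2*x^2 + 8*x + 11 := by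
    nlinarith [sq_nonneg (2*(x+2)*a - (2*x^2+8*x+11)), ha2, ha0, hx,
      mul_nonneg ha0 (by nlinarith : (0:ℝ) ≤ x+2)]
  -- lower bound for b : 7x²-3 ≤ x*b
  have hsum : 0 ≤ 7*x^2 - 3 + x*b := by
    have := mul_nonneg (by linarith : (0:ℝ) ≤ x) hb0
    nlinarith
  have hB : 7*x^2 - 3 ≤ x*b := by nlinarith [hb2, hsum]
  -- clear the division
  have hx1 : x + 1 ≠ 0 := by positivity
  have heq : (x+1)^2 * ((7*x*(x+2)/(x+1)) * (9*x + b + 6))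
      = 7*x*(x+2)*(x+1)*(9*x + b + 6) := by
    field_simp
  rw [heq]
  -- multiply goal through by 2*(x+2) > 0
  have hpos : (0:ℝ) < 2*(x+2) := by linarith
  rw [← mul_lt_mul_iff_right₀ hpos]
  have hA' : 14*x*(8*x^2+27*x+16)*(2*(x+2)*a) ≤ 14*x*(8*x^2+27*x+16)*(2*x^2+8*x+11) :=
    mul_le_mul_of_nonneg_left hA (by nlinarith)
  have hB' : 14*x*(x+2)^2*(7*x^2-3) ≤ 14*x*(x+2)^2*(x*b) :=
    mul_le_mul_of_nonneg_left hB (by nlinarith)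
  nlinarith [hA', hB', hx, sq_nonneg x]
end
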